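/- Let H be a real Hilbert space and let C : I → Conv_H have locally bounded retraction, with ℓ_C(t) := ret(C, [inf I, t] ∩ I). Then for every t ∈ I: (a) the sets C(t+) := {x ∈ H : lim_{s→t+} dist(x,C(s)) = 0} and C(t−) := {x ∈ H : lim_{s→t−} dist(x,C(s)) = 0} are nonempty, closed and convex; (b) e(C(t),C(t+)) = lim_{s→t+} e(C(t),C(s)) = ℓ_C(t+) − ℓ_C(t) and e(C(t−),C(t)) = lim_{s→t−} e(C(s),C(t)) = ℓ_C(t) − ℓ_C(t−); consequently lim_{s→t+} e(C(t),C(s)) = 0 if and only if C(t) ⊆ C(t+), and lim_{s→t−} e(C(s),C(t)) = 0 if and only if C(t−) ⊆ C(t). -/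

import Mathlib

open Filter Metric Set MeasureTheory Topology Function
open scoped ENNReal NNReal Classical

variable {H : Type*} [NormedAddCommGroup H] [InnerProductSpace ℝ H]

/-- A nonempty closed convex subset of `H` (an element of `Conv_H`). -/
def IsConvexBody (K : Set H) : Prop := K.Nonempty ∧ IsClosed K ∧ Convex ℝ K

/-- The excess `e(A,B) = sup_{x ∈ A} dist(x,B)` of `A` over `B`. -/
noncomputable def excess (A B : Set H) : ℝ≥0∞ := ⨆ x ∈ A, EMetric.infEdist x B

/-- The retraction `ret(C,J)` of the moving set `C` on `J`. -/
noncomputable def ret (C : ℝ → Set H) (J : Set ℝ) : ℝ≥0∞ :=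
  ⨆ (m : ℕ) (t : Fin (m + 1) → ℝ) (_ : StrictMono t) (_ : ∀ i, t i ∈ J),
    ∑ i : Fin m, excess (C (t (Fin.castSucc i))) (C (t (Fin.succ i)))

/-- The right limit `h(t+)` of `h` along the interval `I`, with the convention
`h(sup I +) := h(sup I)` when `sup I ∈ I` (for `h` nondecreasing on `I`). -/
noncomputable def rlimOn (h : ℝ → ℝ) (I : Set ℝ) (t : ℝ) : ℝ :=
  if (I ∩ Ioi t).Nonempty then sInf (h '' (I ∩ Ioi t)) else h t

/-- The left limit `h(t−)` of `h` along the interval `I`, with the convention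
`h(inf I −) := h(inf I)` when `inf I ∈ I` (for `h` nondecreasing on `I`). -/
noncomputable def llimOn (h : ℝ → ℝ) (I : Set ℝ) (t : ℝ) : ℝ :=
  if (I ∩ Iio t).Nonempty then sSup (h '' (I ∩ Iio t)) else h t

/-- `C(t+) = {x : dist(x,C(s)) → 0 as s → t+ in I}`, with the convention
`C(sup I +) := C(sup I)` when `sup I ∈ I`. -/
noncomputable def rightLimSetOn (C : ℝ → Set H) (I : Set ℝ) (t : ℝ) : Set H :=
  if (I ∩ Ioi t).Nonempty then
    {x : H | Tendsto (fun s => infDist x (C s)) (𝓝[I ∩ Ioi t] t) (𝓝 0)}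
  else C t

/-- `C(t−) = {x : dist(x,C(s)) → 0 as s → t− in I}`, with the convention
`C(inf I −) := C(inf I)` when `inf I ∈ I`. -/
noncomputable def leftLimSetOn (C : ℝ → Set H) (I : Set ℝ) (t : ℝ) : Set H :=
  if (I ∩ Iio t).Nonempty then
    {x : H | Tendsto (fun s => infDist x (C s)) (𝓝[I ∩ Iio t] t) (𝓝 0)}
  else C t

section AuxBasic

variable {A B D : Set H} {x : H}

lemma excess_le_iff {c : ℝ≥0∞} : excess A B ≤ c ↔ ∀ x ∈ A, EMetric.infEdist x B ≤ c :=
  iSup₂_le_iff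

lemma infEdist_le_excess (hx : x ∈ A) : EMetric.infEdist x B ≤ excess A B :=
  le_iSup₂ (f := fun y (_ : y ∈ A) => EMetric.infEdist y B) x hx

lemma excess_subset_zero (h : A ⊆ B) : excess A B = 0 := by
  refine le_antisymm (excess_le_iff.2 fun x hx => ?_) zero_le
  exact (EMetric.infEdist_zero_of_mem (h hx)).le

lemma infEdist_le_add_excess (x : H) (B D : Set H) :
    EMetric.infEdist x D ≤ EMetric.infEdist x B + excess B D := by
  refine ENNReal.le_of_forall_pos_le_add fun ε hε hlt => ?_
  have hBne : EMetric.infEdist x B ≠ ⊤ := by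
    intro h; rw [h] at hlt; simp at hlt
  have hB : EMetric.infEdist x B < EMetric.infEdist x B + ε :=
    ENNReal.lt_add_right hBne (by exact_mod_cast hε.ne')
  obtain ⟨b, hbB, hb⟩ := EMetric.infEdist_lt_iff.1 hB
  calc EMetric.infEdist x D ≤ edist x b + EMetric.infEdist b D :=
        EMetric.infEdist_le_edist_add_infEdist
    _ ≤ (EMetric.infEdist x B + ε) + excess B D :=
        add_le_add hb.le (infEdist_le_excess hbB)
    _ = EMetric.infEdist x B + excess B D + ε := by ring

lemma excess_triangle (A B D : Set H) : excess A D ≤ excess A B + excess B D :=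
  excess_le_iff.2 fun x hx =>
    (infEdist_le_add_excess x B D).trans (add_le_add_left (infEdist_le_excess hx) _)

lemma infEdist_eq_ofReal (hB : B.Nonempty) (x : H) :
    EMetric.infEdist x B = ENNReal.ofReal (infDist x B) :=
  (ENNReal.ofReal_toReal (Metric.infEdist_ne_top hB)).symm

lemma excess_le_ofReal {c : ℝ} (hB : B.Nonempty) (h : ∀ x ∈ A, infDist x B ≤ c) :
    excess A B ≤ ENNReal.ofReal c :=
  excess_le_iff.2 fun x hx => by
    rw [infEdist_eq_ofReal hB]; exact ENNReal.ofReal_le_ofReal (h x hx)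

lemma infDist_le_of_excess_le {c : ℝ} (hc : 0 ≤ c) (h : excess A B ≤ ENNReal.ofReal c)
    (hx : x ∈ A) : infDist x B ≤ c := by
  have h2 := ENNReal.toReal_mono ENNReal.ofReal_ne_top ((infEdist_le_excess hx).trans h)
  rwa [ENNReal.toReal_ofReal hc] at h2

lemma infDist_le_toReal_excess (hfin : excess A B ≠ ⊤) (hx : x ∈ A) :
    infDist x B ≤ (excess A B).toReal :=
  ENNReal.toReal_mono hfin (infEdist_le_excess hx)

lemma ofReal_infDist_le_excess (hx : x ∈ A) :
    ENNReal.ofReal (infDist x B) ≤ excess A B :=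
  le_trans ENNReal.ofReal_toReal_le (infEdist_le_excess hx)

lemma exists_infDist_gt {A B : Set H} {c : ℝ≥0∞} (h : c < excess A B) :
    ∃ z ∈ A, c < EMetric.infEdist z B := by
  rw [excess] at h
  obtain ⟨z, hz⟩ := lt_iSup_iff.1 h
  obtain ⟨hzm, hz2⟩ := lt_iSup_iff.1 hz
  exact ⟨z, hzm, hz2⟩

lemma infDist_combo {K : Set H} (hK : Convex ℝ K) (hne : K.Nonempty) (x y : H) {a b : ℝ}
    (ha : 0 ≤ a) (hb : 0 ≤ b) (hab : a + b = 1) :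
    infDist (a • x + b • y) K ≤ a * infDist x K + b * infDist y K := by
  refine le_of_forall_pos_le_add fun ε hε => ?_
  obtain ⟨p, hp, hxp⟩ := (Metric.infDist_lt_iff hne).1
    (lt_add_of_pos_right (infDist x K) (half_pos hε))
  obtain ⟨q, hq, hyq⟩ := (Metric.infDist_lt_iff hne).1
    (lt_add_of_pos_right (infDist y K) (half_pos hε))
  have hmem : a • p + b • q ∈ K := hK hp hq ha hb hab
  have hd : dist (a • x + b • y) (a • p + b • q) ≤ a * dist x p + b * dist y q := by
    rw [dist_eq_norm, dist_eq_norm, dist_eq_norm]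
    have : a • x + b • y - (a • p + b • q) = a • (x - p) + b • (y - q) := by
      module
    rw [this]
    calc ‖a • (x - p) + b • (y - q)‖ ≤ ‖a • (x - p)‖ + ‖b • (y - q)‖ := norm_add_le _ _
      _ = a * ‖x - p‖ + b * ‖y - q‖ := by
          rw [norm_smul, norm_smul, Real.norm_eq_abs, Real.norm_eq_abs,
            abs_of_nonneg ha, abs_of_nonneg hb]
  calc infDist (a • x + b • y) K ≤ dist (a • x + b • y) (a • p + b • q) :=
        infDist_le_dist_of_mem hmem
    _ ≤ a * dist x p + b * dist y q := hd
    _ ≤ a * infDist x K + b * infDist y K + ε := by nlinarith [dist_nonneg (x := x) (y := p)]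

end AuxBasic

section AuxRet

variable (C : ℝ → Set H) {I : Set ℝ} {L : ℝ → ℝ}

lemma fin_sum_bridge {m : ℕ} (u : Fin (m+1) → ℝ) (U : ℕ → ℝ)
    (hU : ∀ (j : ℕ) (h : j ≤ m), U j = u ⟨j, Nat.lt_succ_of_le h⟩) :
    ∑ i : Fin m, excess (C (u i.castSucc)) (C (u i.succ))
      = ∑ j ∈ Finset.range m, excess (C (U j)) (C (U (j+1))) := by
  rw [← Fin.sum_univ_eq_sum_range (fun j => excess (C (U j)) (C (U (j+1)))) m]
  refine Finset.sum_congr rfl fun i _ => ?_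
  have e1 : u (Fin.castSucc i) = U (i : ℕ) := by
    rw [hU _ i.isLt.le]; congr 1
  have e2 : u (Fin.succ i) = U ((i : ℕ) + 1) := by
    rw [hU _ (Nat.succ_le_of_lt i.isLt)]; congr 1
  rw [e1, e2]

lemma sum_le_ret {J : Set ℝ} (U : ℕ → ℝ) (a b : ℕ) (hab : a ≤ b)
    (hmono : ∀ j, a ≤ j → j < b → U j < U (j+1))
    (hmem : ∀ j, a ≤ j → j ≤ b → U j ∈ J) :
    ∑ j ∈ Finset.Ico a b, excess (C (U j)) (C (U (j+1))) ≤ ret C J := by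
  set m := b - a with hm
  set u : Fin (m+1) → ℝ := fun i => U (a + i) with hu
  have humono : StrictMono u := by
    rw [Fin.strictMono_iff_lt_succ]
    intro i
    show u i.castSucc < u i.succ
    simp only [hu, Fin.coe_castSucc, Fin.val_succ]
    have h2 : a + ((i : ℕ) + 1) = (a + (i : ℕ)) + 1 := by omega
    rw [h2]
    exact hmono _ (Nat.le_add_right _ _) (by have := i.isLt; omega)
  have humem : ∀ i, u i ∈ J := fun i =>
    hmem (a + (i : ℕ)) (Nat.le_add_right _ _) (by have := i.isLt; omega)
  have hsum : ∑ i : Fin m, excess (C (u i.castSucc)) (C (u i.succ))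
      = ∑ j ∈ Finset.Ico a b, excess (C (U j)) (C (U (j+1))) := by
    rw [fin_sum_bridge C u (fun j => U (a + j)) (fun j h => rfl),
      Finset.sum_Ico_eq_sum_range]
    exact Finset.sum_congr rfl fun k _ => by rw [Nat.add_assoc]
  calc ∑ j ∈ Finset.Ico a b, excess (C (U j)) (C (U (j+1)))
      = ∑ i : Fin m, excess (C (u i.castSucc)) (C (u i.succ)) := hsum.symm
    _ ≤ ret C J := by
        refine le_iSup_of_le m (le_iSup_of_le u (le_iSup_of_le humono
          (le_iSup_of_le humem le_rfl)))

variable {C}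

lemma ret_step (hL : ∀ r ∈ I, ENNReal.ofReal (L r) = ret C (I ∩ Iic r))
    {a b : ℝ} (ha : a ∈ I) (hb : b ∈ I) (hab : a ≤ b) :
    ENNReal.ofReal (L a) + excess (C a) (C b) ≤ ENNReal.ofReal (L b) := by
  rcases eq_or_lt_of_le hab with rfl | hab'
  · rw [excess_subset_zero subset_rfl, add_zero]
  have key : ∀ (m : ℕ) (u : Fin (m+1) → ℝ), StrictMono u → (∀ i, u i ∈ I ∩ Iic a) →
      (∑ i : Fin m, excess (C (u i.castSucc)) (C (u i.succ))) + excess (C a) (C b)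
        ≤ ENNReal.ofReal (L b) := by
    intro m u hu hmem
    rw [hL b hb]
    by_cases hlast : u (Fin.last m) = a
    · set U : ℕ → ℝ := fun j => if h : j ≤ m then u ⟨j, Nat.lt_succ_of_le h⟩ else b with hU
      have hUm : U m = a := by rw [hU]; simp only [dif_pos (le_refl m)]; rw [← hlast]; rfl
      have hUm1 : U (m+1) = b := by rw [hU]; simp
      have h1 : ∑ j ∈ Finset.Ico 0 (m+1), excess (C (U j)) (C (U (j+1))) ≤ ret C (I ∩ Iic b) := by
        apply sum_le_ret C U 0 (m+1) (Nat.zero_le _)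
        · intro j _ hj
          rcases Nat.lt_or_ge j m with hjm | hjm
          · have e1 : U j = u ⟨j, Nat.lt_succ_of_le hjm.le⟩ := by rw [hU]; simp [hjm.le]
            have e2 : U (j+1) = u ⟨j+1, Nat.succ_lt_succ hjm⟩ := by
              rw [hU]; simp only []; rw [dif_pos (Nat.succ_le_of_lt hjm)]
            rw [e1, e2]; exact hu (by simp [Fin.lt_def])
          · have hjm' : j = m := by omega
            subst hjm'; rw [hUm, hUm1]; exact hab'
        · intro j _ hj
          rcases Nat.lt_or_ge j (m+1) with hjm | hjm
          · have hjle : j ≤ m := by omega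
            have e1 : U j = u ⟨j, Nat.lt_succ_of_le hjle⟩ := by rw [hU]; simp [hjle]
            rw [e1]
            exact ⟨(hmem _).1, le_trans (hmem _).2 hab⟩
          · have : j = m + 1 := by omega
            subst this; rw [hUm1]; exact ⟨hb, le_refl b⟩
      have h2 : ∑ j ∈ Finset.Ico 0 (m+1), excess (C (U j)) (C (U (j+1)))
          = (∑ i : Fin m, excess (C (u i.castSucc)) (C (u i.succ))) + excess (C a) (C b) := by
        rw [Finset.sum_Ico_succ_top (Nat.zero_le _), hUm, hUm1, ← Finset.range_eq_Ico,
          fin_sum_bridge C u U (fun j h => by rw [hU]; simp [h])]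
      rw [← h2]; exact h1
    · have hlast' : u (Fin.last m) < a := lt_of_le_of_ne (hmem _).2 hlast
      set U : ℕ → ℝ := fun j => if h : j ≤ m then u ⟨j, Nat.lt_succ_of_le h⟩
        else if j = m + 1 then a else b with hU
      have hUm : U m = u (Fin.last m) := by rw [hU]; simp only [dif_pos (le_refl m)]; rfl
      have hUm1 : U (m+1) = a := by rw [hU]; simp
      have hUm2 : U (m+2) = b := by rw [hU]; norm_num
      have h1 : ∑ j ∈ Finset.Ico 0 (m+2), excess (C (U j)) (C (U (j+1))) ≤ ret C (I ∩ Iic b) := by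
        apply sum_le_ret C U 0 (m+2) (Nat.zero_le _)
        · intro j _ hj
          rcases Nat.lt_or_ge j m with hjm | hjm
          · have e1 : U j = u ⟨j, Nat.lt_succ_of_le hjm.le⟩ := by rw [hU]; simp [hjm.le]
            have e2 : U (j+1) = u ⟨j+1, Nat.succ_lt_succ hjm⟩ := by
              rw [hU]; simp only []; rw [dif_pos (Nat.succ_le_of_lt hjm)]
            rw [e1, e2]; exact hu (by simp [Fin.lt_def])
          · rcases Nat.lt_or_ge j (m+1) with hjm1 | hjm1
            · have : j = m := by omega
              subst this; rw [hUm, hUm1]; exact hlast'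
            · have : j = m + 1 := by omega
              subst this; rw [hUm1, hUm2]; exact hab'
        · intro j _ hj
          rcases Nat.lt_or_ge j (m+1) with hjm | hjm
          · have hjle : j ≤ m := by omega
            have e1 : U j = u ⟨j, Nat.lt_succ_of_le hjle⟩ := by rw [hU]; simp [hjle]
            rw [e1]; exact ⟨(hmem _).1, le_trans (hmem _).2 hab⟩
          · rcases Nat.lt_or_ge j (m+2) with hjm2 | hjm2
            · have : j = m + 1 := by omega
              subst this; rw [hUm1]; exact ⟨ha, hab⟩
            · have : j = m + 2 := by omega
              subst this; rw [hUm2]; exact ⟨hb, le_refl b⟩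
      have h2 : ∑ j ∈ Finset.Ico 0 (m+2), excess (C (U j)) (C (U (j+1)))
          = ((∑ i : Fin m, excess (C (u i.castSucc)) (C (u i.succ)))
              + excess (C (u (Fin.last m))) (C a)) + excess (C a) (C b) := by
        have hstep : m ≤ m + 1 := Nat.le_succ m
        rw [Finset.sum_Ico_succ_top (Nat.zero_le _), Finset.sum_Ico_succ_top (Nat.zero_le _),
          hUm, hUm1, hUm2, ← Finset.range_eq_Ico,
          fin_sum_bridge C u U (fun j h => by rw [hU]; simp [h])]
      calc (∑ i : Fin m, excess (C (u i.castSucc)) (C (u i.succ))) + excess (C a) (C b)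
          ≤ ((∑ i : Fin m, excess (C (u i.castSucc)) (C (u i.succ)))
              + excess (C (u (Fin.last m))) (C a)) + excess (C a) (C b) := by
            gcongr; exact le_add_right le_rfl
        _ = ∑ j ∈ Finset.Ico 0 (m+2), excess (C (U j)) (C (U (j+1))) := h2.symm
        _ ≤ ret C (I ∩ Iic b) := h1
  rw [hL a ha]
  have hfin : excess (C a) (C b) ≤ ENNReal.ofReal (L b) := by
    have hsm : StrictMono (fun _ : Fin 1 => a) := by
      intro i j hij
      have hi := i.isLt; have hj := j.isLt
      rw [Fin.lt_def] at hij
      exact absurd hij (by omega)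
    have h0 := key 0 (fun _ => a) hsm (fun i => ⟨ha, le_refl a⟩)
    simpa using h0
  have hfin' : excess (C a) (C b) ≠ ⊤ := ne_top_of_le_ne_top ENNReal.ofReal_ne_top hfin
  have h2 : ret C (I ∩ Iic a) ≤ ENNReal.ofReal (L b) - excess (C a) (C b) := by
    rw [ret]
    refine iSup_le fun m => iSup_le fun u => iSup_le fun hu => iSup_le fun hm =>
      ENNReal.le_sub_of_add_le_right hfin' (key m u hu hm)
  calc ret C (I ∩ Iic a) + excess (C a) (C b)
      ≤ (ENNReal.ofReal (L b) - excess (C a) (C b)) + excess (C a) (C b) :=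
        add_le_add_left h2 _
    _ = ENNReal.ofReal (L b) := tsub_add_cancel_of_le hfin

lemma L_mono (hL0 : ∀ r ∈ I, 0 ≤ L r)
    (hL : ∀ r ∈ I, ENNReal.ofReal (L r) = ret C (I ∩ Iic r))
    {a b : ℝ} (ha : a ∈ I) (hb : b ∈ I) (hab : a ≤ b) : L a ≤ L b := by
  have h := ret_step hL ha hb hab
  have h2 : ENNReal.ofReal (L a) ≤ ENNReal.ofReal (L b) :=
    le_trans le_self_add h
  exact (ENNReal.ofReal_le_ofReal_iff (hL0 b hb)).1 h2

lemma excess_le_L (hL0 : ∀ r ∈ I, 0 ≤ L r)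
    (hL : ∀ r ∈ I, ENNReal.ofReal (L r) = ret C (I ∩ Iic r))
    {a b : ℝ} (ha : a ∈ I) (hb : b ∈ I) (hab : a ≤ b) :
    excess (C a) (C b) ≤ ENNReal.ofReal (L b - L a) := by
  have h := ret_step hL ha hb hab
  have h2 : excess (C a) (C b) ≤ ENNReal.ofReal (L b) - ENNReal.ofReal (L a) :=
    ENNReal.le_sub_of_add_le_right ENNReal.ofReal_ne_top (by rwa [add_comm] at h)
  rwa [← ENNReal.ofReal_sub _ (hL0 a ha)] at h2

lemma excess_ne_top_L (hL0 : ∀ r ∈ I, 0 ≤ L r)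
    (hL : ∀ r ∈ I, ENNReal.ofReal (L r) = ret C (I ∩ Iic r))
    {a b : ℝ} (ha : a ∈ I) (hb : b ∈ I) (hab : a ≤ b) : excess (C a) (C b) ≠ ⊤ :=
  ne_top_of_le_ne_top ENNReal.ofReal_ne_top (excess_le_L hL0 hL ha hb hab)

lemma toReal_excess_le_L (hL0 : ∀ r ∈ I, 0 ≤ L r)
    (hL : ∀ r ∈ I, ENNReal.ofReal (L r) = ret C (I ∩ Iic r))
    {a b : ℝ} (ha : a ∈ I) (hb : b ∈ I) (hab : a ≤ b) :
    (excess (C a) (C b)).toReal ≤ L b - L a := by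
  have h := ENNReal.toReal_mono ENNReal.ofReal_ne_top (excess_le_L hL0 hL ha hb hab)
  rwa [ENNReal.toReal_ofReal (sub_nonneg.2 (L_mono hL0 hL ha hb hab))] at h

lemma nat_mono_of_step {U : ℕ → ℝ} {a b : ℕ} (h : ∀ j, a ≤ j → j < b → U j ≤ U (j+1)) :
    ∀ p q, a ≤ p → p ≤ q → q ≤ b → U p ≤ U q := by
  intro p q hp hpq hqb
  induction q, hpq using Nat.le_induction with
  | base => exact le_refl _
  | succ q hq ih =>
    exact le_trans (ih (by omega)) (h q (le_trans hp hq) (by omega))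

lemma tel_sum (hL0 : ∀ r ∈ I, 0 ≤ L r)
    (hL : ∀ r ∈ I, ENNReal.ofReal (L r) = ret C (I ∩ Iic r))
    {U : ℕ → ℝ} {a b : ℕ} (hab : a ≤ b)
    (hmono : ∀ j, a ≤ j → j < b → U j ≤ U (j+1))
    (hmem : ∀ j, a ≤ j → j ≤ b → U j ∈ I) :
    ∑ j ∈ Finset.Ico a b, excess (C (U j)) (C (U (j+1)))
      ≤ ENNReal.ofReal (L (U b) - L (U a)) := by
  induction b, hab using Nat.le_induction with
  | base => simp
  | succ b hab ih =>
    rw [Finset.sum_Ico_succ_top hab]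
    have h1 := ih (fun j hj hjb => hmono j hj (by omega)) (fun j hj hjb => hmem j hj (by omega))
    have hmemb : U b ∈ I := hmem b hab (by omega)
    have hmemb1 : U (b+1) ∈ I := hmem (b+1) (by omega) (le_refl _)
    have h2 : excess (C (U b)) (C (U (b+1))) ≤ ENNReal.ofReal (L (U (b+1)) - L (U b)) :=
      excess_le_L hL0 hL hmemb hmemb1 (hmono b hab (by omega))
    have hUab : U a ≤ U b := nat_mono_of_step (fun j hj hjb => hmono j hj (by omega)) a b
      (le_refl _) hab (le_refl _)
    have hLab : L (U a) ≤ L (U b) := L_mono hL0 hL (hmem a (le_refl _) (by omega)) hmemb hUab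
    have hLb : L (U b) ≤ L (U (b+1)) := L_mono hL0 hL hmemb hmemb1 (hmono b hab (by omega))
    calc _ ≤ ENNReal.ofReal (L (U b) - L (U a)) + ENNReal.ofReal (L (U (b+1)) - L (U b)) :=
          add_le_add h1 h2
      _ = ENNReal.ofReal (L (U (b+1)) - L (U a)) := by
          rw [← ENNReal.ofReal_add (by linarith) (by linarith)]; congr 1; ring

end AuxRet

section AuxSplit

variable {C : ℝ → Set H} {I : Set ℝ} {L : ℝ → ℝ}

lemma exists_right_lower (hL0 : ∀ r ∈ I, 0 ≤ L r)
    (hL : ∀ r ∈ I, ENNReal.ofReal (L r) = ret C (I ∩ Iic r))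
    {t s : ℝ} (ht : t ∈ I) (hs : s ∈ I) (hts : t < s) {ε : ℝ} (hε : 0 < ε) :
    ∃ u, u ∈ I ∩ Ioc t s ∧ L u - L t ≤ (excess (C t) (C u)).toReal + ε := by
  set B := ⨆ (r : ℝ) (_ : r ∈ I ∩ Ioc t s), (excess (C t) (C r) + ENNReal.ofReal (L s - L r))
    with hB
  have core : ENNReal.ofReal (L s) ≤ ENNReal.ofReal (L t) + B := by
    rw [hL s hs, ret]
    refine iSup_le fun m => iSup_le fun u => iSup_le fun hu => iSup_le fun hmem => ?_
    set U : ℕ → ℝ := fun j => if h : j ≤ m then u ⟨j, Nat.lt_succ_of_le h⟩ else u (Fin.last m)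
      with hUdef
    have hUj : ∀ (j : ℕ) (h : j ≤ m), U j = u ⟨j, Nat.lt_succ_of_le h⟩ := fun j h => by
      rw [hUdef]; simp [h]
    have hUmem : ∀ j, j ≤ m → U j ∈ I ∩ Iic s := fun j hj => by
      rw [hUj j hj]; exact hmem _
    have hUmono : ∀ j, j < m → U j < U (j+1) := fun j hj => by
      rw [hUj j hj.le, hUj (j+1) hj]
      exact hu (by simp [Fin.lt_def])
    have hUmono2 : ∀ p q, p ≤ q → q ≤ m → U p ≤ U q := fun p q hpq hq =>
      nat_mono_of_step (fun j hj hjm => (hUmono j hjm).le) p q (Nat.zero_le _) hpq hq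
    rw [fin_sum_bridge C u U hUj, Finset.range_eq_Ico]
    by_cases h0 : U 0 ≤ t
    · have hKle : Nat.findGreatest (fun j => U j ≤ t) m ≤ m :=
        Nat.findGreatest_le (P := fun j => U j ≤ t) m
      have hKP : U (Nat.findGreatest (fun j => U j ≤ t) m) ≤ t :=
        Nat.findGreatest_spec (P := fun j => U j ≤ t) (Nat.zero_le m) h0
      have hgt : ∀ j, Nat.findGreatest (fun j => U j ≤ t) m < j → j ≤ m → t < U j :=
        fun j h1 h2 => lt_of_not_ge (Nat.findGreatest_is_greatest (P := fun j => U j ≤ t) h1 h2)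
      set K := Nat.findGreatest (fun j => U j ≤ t) m with hK
      rcases Nat.lt_or_ge K m with hKm | hKm
      · -- split at K
        have hsplit : ∑ j ∈ Finset.Ico 0 m, excess (C (U j)) (C (U (j+1)))
            = (∑ j ∈ Finset.Ico 0 K, excess (C (U j)) (C (U (j+1))))
              + (excess (C (U K)) (C (U (K+1)))
                + ∑ j ∈ Finset.Ico (K+1) m, excess (C (U j)) (C (U (j+1)))) := by
          rw [← Finset.sum_Ico_consecutive _ (Nat.zero_le K) hKm.le,
            Finset.sum_eq_sum_Ico_succ_bot hKm]
        have hsufmem : U (K+1) ∈ I ∩ Ioc t s :=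
          ⟨(hUmem (K+1) hKm).1, hgt (K+1) (Nat.lt_succ_self K) hKm, (hUmem (K+1) hKm).2⟩
        have hsuf : ∑ j ∈ Finset.Ico (K+1) m, excess (C (U j)) (C (U (j+1)))
            ≤ ENNReal.ofReal (L s - L (U (K+1))) := by
          refine le_trans (tel_sum hL0 hL hKm (fun j hj hjm => (hUmono j hjm).le)
            (fun j hj hjm => (hUmem j hjm).1)) ?_
          apply ENNReal.ofReal_le_ofReal
          have : L (U m) ≤ L s := L_mono hL0 hL (hUmem m (le_refl m)).1 hs (hUmem m (le_refl m)).2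
          linarith
        have hpre : (∑ j ∈ Finset.Ico 0 K, excess (C (U j)) (C (U (j+1))))
            + excess (C (U K)) (C t) ≤ ENNReal.ofReal (L t) := by
          rcases eq_or_lt_of_le hKP with hKt | hKt
          · rw [hKt, excess_subset_zero subset_rfl, add_zero, hL t ht]
            apply sum_le_ret C U 0 K (Nat.zero_le K)
            · exact fun j _ hj => hUmono j (lt_of_lt_of_le hj hKle)
            · exact fun j _ hj => ⟨(hUmem j (le_trans hj hKle)).1,
                le_trans (hUmono2 j K hj hKle) hKP⟩
          · set U' : ℕ → ℝ := fun j => if j ≤ K then U j else t with hU'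
            have hU'j : ∀ j, j ≤ K → U' j = U j := fun j hj => by rw [hU']; simp [hj]
            have hU'K1 : U' (K+1) = t := by rw [hU']; simp
            have heq : ∑ j ∈ Finset.Ico 0 (K+1), excess (C (U' j)) (C (U' (j+1)))
                = (∑ j ∈ Finset.Ico 0 K, excess (C (U j)) (C (U (j+1))))
                  + excess (C (U K)) (C t) := by
              rw [Finset.sum_Ico_succ_top (Nat.zero_le K), hU'K1, hU'j K (le_refl K)]
              congr 1
              refine Finset.sum_congr rfl fun j hj => ?_
              rw [Finset.mem_Ico] at hj
              rw [hU'j j hj.2.le, hU'j (j+1) hj.2]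
            rw [← heq, hL t ht]
            apply sum_le_ret C U' 0 (K+1) (Nat.zero_le _)
            · intro j _ hj
              rcases Nat.lt_or_ge j K with hjK | hjK
              · rw [hU'j j hjK.le, hU'j (j+1) hjK]
                exact hUmono j (lt_of_lt_of_le hjK hKle)
              · have : j = K := by omega
                subst this
                rw [hU'j _ (le_refl _), hU'K1]
                exact hKt
            · intro j _ hj
              rcases Nat.lt_or_ge j (K+1) with hjK | hjK
              · have hjK' : j ≤ K := by omega
                rw [hU'j j hjK']
                exact ⟨(hUmem j (le_trans hjK' hKle)).1,
                  le_trans (hUmono2 j K hjK' hKle) hKP⟩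
              · have : j = K + 1 := by omega
                subst this
                rw [hU'K1]
                exact ⟨ht, le_refl t⟩
        have htri : excess (C (U K)) (C (U (K+1)))
            ≤ excess (C (U K)) (C t) + excess (C t) (C (U (K+1))) := excess_triangle _ _ _
        calc ∑ j ∈ Finset.Ico 0 m, excess (C (U j)) (C (U (j+1)))
            ≤ ((∑ j ∈ Finset.Ico 0 K, excess (C (U j)) (C (U (j+1))))
                + excess (C (U K)) (C t))
              + (excess (C t) (C (U (K+1))) + ENNReal.ofReal (L s - L (U (K+1)))) := by
              rw [hsplit]
              calc _ ≤ (∑ j ∈ Finset.Ico 0 K, excess (C (U j)) (C (U (j+1))))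
                  + ((excess (C (U K)) (C t) + excess (C t) (C (U (K+1))))
                    + ENNReal.ofReal (L s - L (U (K+1)))) := by
                    gcongr
                _ = _ := by ring
          _ ≤ ENNReal.ofReal (L t) + B := by
              refine add_le_add hpre ?_
              rw [hB]
              exact le_iSup_of_le (U (K+1)) (le_iSup_of_le hsufmem le_rfl)
      · -- K = m : whole partition is below t
        have hKm' : K = m := le_antisymm hKle hKm
        have hall : ∑ j ∈ Finset.Ico 0 m, excess (C (U j)) (C (U (j+1)))
            ≤ ENNReal.ofReal (L t) := by
          rw [hL t ht]
          apply sum_le_ret C U 0 m (Nat.zero_le m)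
          · exact fun j _ hj => hUmono j hj
          · intro j _ hj
            exact ⟨(hUmem j hj).1, le_trans (hUmono2 j m hj (le_refl m)) (hKm' ▸ hKP)⟩
        exact le_trans hall le_self_add
    · -- all points above t
      push_neg at h0
      have h0mem : U 0 ∈ I ∩ Ioc t s := ⟨(hUmem 0 (Nat.zero_le m)).1, h0, (hUmem 0 (Nat.zero_le m)).2⟩
      have htel : ∑ j ∈ Finset.Ico 0 m, excess (C (U j)) (C (U (j+1)))
          ≤ ENNReal.ofReal (L s - L (U 0)) := by
        refine le_trans (tel_sum hL0 hL (Nat.zero_le m) (fun j hj hjm => (hUmono j hjm).le)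
          (fun j hj hjm => (hUmem j hjm).1)) ?_
        apply ENNReal.ofReal_le_ofReal
        have : L (U m) ≤ L s := L_mono hL0 hL (hUmem m (le_refl m)).1 hs (hUmem m (le_refl m)).2
        linarith
      calc ∑ j ∈ Finset.Ico 0 m, excess (C (U j)) (C (U (j+1)))
          ≤ excess (C t) (C (U 0)) + ENNReal.ofReal (L s - L (U 0)) :=
            le_trans htel le_add_self
        _ ≤ B := by rw [hB]; exact le_iSup_of_le (U 0) (le_iSup_of_le h0mem le_rfl)
        _ ≤ ENNReal.ofReal (L t) + B := le_add_self
  rcases le_or_gt (L s - L t) ε with hsmall | hbig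
  · refine ⟨s, ⟨hs, hts, le_refl s⟩, ?_⟩
    have := ENNReal.toReal_nonneg (a := excess (C t) (C s))
    linarith
  · have h4 : ENNReal.ofReal (L s - L t) ≤ B := by
      rw [ENNReal.ofReal_sub _ (hL0 t ht)]
      exact tsub_le_iff_right.2 (by rwa [add_comm] at core)
    have h3 : ENNReal.ofReal (L s - L t - ε) < B :=
      lt_of_lt_of_le ((ENNReal.ofReal_lt_ofReal_iff (by linarith)).2 (by linarith)) h4
    rw [hB] at h3
    obtain ⟨r, hr3⟩ := lt_iSup_iff.1 h3
    obtain ⟨hrmem, hr4⟩ := lt_iSup_iff.1 hr3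
    refine ⟨r, hrmem, ?_⟩
    have hfin : excess (C t) (C r) ≠ ⊤ := excess_ne_top_L hL0 hL ht hrmem.1 hrmem.2.1.le
    have hLr : L r ≤ L s := L_mono hL0 hL hrmem.1 hs hrmem.2.2
    have h5 := ENNReal.toReal_mono (by
      exact ENNReal.add_ne_top.2 ⟨hfin, ENNReal.ofReal_ne_top⟩) hr4.le
    rw [ENNReal.toReal_ofReal (by linarith), ENNReal.toReal_add hfin ENNReal.ofReal_ne_top,
      ENNReal.toReal_ofReal (by linarith)] at h5
    linarith

lemma exists_left_lower (hL0 : ∀ r ∈ I, 0 ≤ L r)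
    (hL : ∀ r ∈ I, ENNReal.ofReal (L r) = ret C (I ∩ Iic r))
    {t : ℝ} (ht : t ∈ I) {u₀ : ℝ} (hu₀ : u₀ ∈ I ∩ Iio t) {ε : ℝ} (hε : 0 < ε) :
    ∃ u, u ∈ I ∩ Iio t ∧ L t ≤ (excess (C u) (C t)).toReal + L u + ε := by
  set B := ⨆ (r : ℝ) (_ : r ∈ I ∩ Iio t), (excess (C r) (C t) + ENNReal.ofReal (L r)) with hB
  have core : ENNReal.ofReal (L t) ≤ B := by
    rw [hL t ht, ret]
    refine iSup_le fun m => iSup_le fun u => iSup_le fun hu => iSup_le fun hmem => ?_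
    set U : ℕ → ℝ := fun j => if h : j ≤ m then u ⟨j, Nat.lt_succ_of_le h⟩ else u (Fin.last m)
      with hUdef
    have hUj : ∀ (j : ℕ) (h : j ≤ m), U j = u ⟨j, Nat.lt_succ_of_le h⟩ := fun j h => by
      rw [hUdef]; simp [h]
    have hUmem : ∀ j, j ≤ m → U j ∈ I ∩ Iic t := fun j hj => by
      rw [hUj j hj]; exact hmem _
    have hUmono : ∀ j, j < m → U j < U (j+1) := fun j hj => by
      rw [hUj j hj.le, hUj (j+1) hj]
      exact hu (by simp [Fin.lt_def])
    rw [fin_sum_bridge C u U hUj, Finset.range_eq_Ico]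
    rcases eq_or_lt_of_le (show U m ≤ t from (hUmem m (le_refl m)).2) with hUm | hUm
    · -- U m = t
      rcases Nat.eq_zero_or_pos m with rfl | hm
      · simp
      · obtain ⟨m', rfl⟩ := Nat.exists_eq_succ_of_ne_zero hm.ne'
        have hmem' : U m' ∈ I ∩ Iio t :=
          ⟨(hUmem m' (Nat.le_succ m')).1, lt_of_lt_of_le (hUmono m' (Nat.lt_succ_self m')) hUm.le⟩
        rw [Finset.sum_Ico_succ_top (Nat.zero_le m')]
        have htel : ∑ j ∈ Finset.Ico 0 m', excess (C (U j)) (C (U (j+1)))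
            ≤ ENNReal.ofReal (L (U m')) := by
          refine le_trans (tel_sum hL0 hL (Nat.zero_le m')
            (fun j hj hjm => (hUmono j (by omega)).le)
            (fun j hj hjm => (hUmem j (by omega)).1)) ?_
          apply ENNReal.ofReal_le_ofReal
          have := hL0 (U 0) (hUmem 0 (Nat.zero_le _)).1
          linarith
        have hlast : excess (C (U m')) (C (U (m'+1))) = excess (C (U m')) (C t) := by
          rw [hUm]
        calc _ ≤ ENNReal.ofReal (L (U m')) + excess (C (U m')) (C t) := by
              rw [hlast]; exact add_le_add_left htel _
          _ = excess (C (U m')) (C t) + ENNReal.ofReal (L (U m')) := add_comm _ _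
          _ ≤ B := by rw [hB]; exact le_iSup_of_le (U m') (le_iSup_of_le hmem' le_rfl)
    · -- U m < t
      have hmem' : U m ∈ I ∩ Iio t := ⟨(hUmem m (le_refl m)).1, hUm⟩
      have htel : ∑ j ∈ Finset.Ico 0 m, excess (C (U j)) (C (U (j+1)))
          ≤ ENNReal.ofReal (L (U m)) := by
        refine le_trans (tel_sum hL0 hL (Nat.zero_le m)
          (fun j hj hjm => (hUmono j hjm).le)
          (fun j hj hjm => (hUmem j hjm).1)) ?_
        apply ENNReal.ofReal_le_ofReal
        have := hL0 (U 0) (hUmem 0 (Nat.zero_le _)).1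
        linarith
      calc _ ≤ ENNReal.ofReal (L (U m)) := htel
        _ ≤ excess (C (U m)) (C t) + ENNReal.ofReal (L (U m)) := le_add_self
        _ ≤ B := by rw [hB]; exact le_iSup_of_le (U m) (le_iSup_of_le hmem' le_rfl)
  rcases le_or_gt (L t) ε with hsmall | hbig
  · refine ⟨u₀, hu₀, ?_⟩
    have h1 := ENNReal.toReal_nonneg (a := excess (C u₀) (C t))
    have h2 := hL0 u₀ hu₀.1
    linarith
  · have h3 : ENNReal.ofReal (L t - ε) < B :=
      lt_of_lt_of_le ((ENNReal.ofReal_lt_ofReal_iff (by linarith)).2 (by linarith)) core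
    rw [hB] at h3
    obtain ⟨r, hr3⟩ := lt_iSup_iff.1 h3
    obtain ⟨hrmem, hr4⟩ := lt_iSup_iff.1 hr3
    refine ⟨r, hrmem, ?_⟩
    have hfin : excess (C r) (C t) ≠ ⊤ := excess_ne_top_L hL0 hL hrmem.1 ht hrmem.2.le
    have h5 := ENNReal.toReal_mono
      (ENNReal.add_ne_top.2 ⟨hfin, ENNReal.ofReal_ne_top⟩) hr4.le
    rw [ENNReal.toReal_ofReal (by linarith), ENNReal.toReal_add hfin ENNReal.ofReal_ne_top,
      ENNReal.toReal_ofReal (hL0 r hrmem.1)] at h5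
    linarith

end AuxSplit

section AuxPoints

lemma rightpt [CompleteSpace H] {K : ℕ → Set H} (hne : ∀ n, (K n).Nonempty)
    (hcv : ∀ n, Convex ℝ (K n)) {a : ℕ → ℝ} {α : ℝ} (ha : Antitone a)
    (hα : Tendsto a atTop (𝓝 α))
    (hexc : ∀ n m : ℕ, n ≤ m → ∀ z ∈ K m, infDist z (K n) ≤ a n - a m)
    (x : H) {c : ℝ} (hd : ∀ n, infDist x (K n) ≤ a n - c) :
    ∃ y : H, (∀ n, infDist y (K n) ≤ a n - α) ∧ dist x y ≤ α - c := by
  set d : ℕ → ℝ := fun n => infDist x (K n) with hdd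
  have hα_le : ∀ n, α ≤ a n := fun n =>
    le_of_tendsto hα (eventually_atTop.2 ⟨n, fun m hm => ha hm⟩)
  have hdmono : ∀ n m, n ≤ m → d n ≤ d m + (a n - a m) := by
    intro n m hnm
    refine le_of_forall_pos_le_add fun δ hδ => ?_
    obtain ⟨zz, hz, hxz⟩ := (Metric.infDist_lt_iff (hne m)).1
      (lt_add_of_pos_right (d m) (half_pos hδ))
    obtain ⟨w, hw, hzw⟩ := (Metric.infDist_lt_iff (hne n)).1
      (lt_of_le_of_lt (hexc n m hnm zz hz) (lt_add_of_pos_right _ (half_pos hδ)))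
    calc d n ≤ dist x w := infDist_le_dist_of_mem hw
      _ ≤ dist x zz + dist zz w := dist_triangle _ _ _
      _ ≤ (d m + δ/2) + ((a n - a m) + δ/2) := add_le_add hxz.le hzw.le
      _ = d m + (a n - a m) + δ := by ring
  set f : ℕ → ℝ := fun n => d n - a n with hff
  have hfmono : Monotone f := fun n m hnm => by
    have := hdmono n m hnm
    simp only [hff]
    linarith
  have hfbdd : ∀ n, f n ≤ -c := fun n => by
    have := hd n
    simp only [hff, hdd]
    linarith
  have hbdd : BddAbove (Set.range f) := ⟨-c, by rintro y ⟨n, rfl⟩; exact hfbdd n⟩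
  set F := ⨆ n, f n with hF
  have hfF : ∀ n, f n ≤ F := fun n => le_ciSup hbdd n
  have hFc : F ≤ -c := ciSup_le hfbdd
  have hfT : Tendsto f atTop (𝓝 F) := tendsto_atTop_ciSup hfmono hbdd
  have hdT : Tendsto d atTop (𝓝 (F + α)) := by
    have h1 := hfT.add hα
    have h2 : (fun n => f n + a n) = d := by funext n; simp [hff]
    rwa [h2] at h1
  set ee : ℕ → ℝ := fun n => (2⁻¹ : ℝ) ^ n with hee
  have heepos : ∀ n, 0 < ee n := fun n => pow_pos (by norm_num) n
  have heeT : Tendsto ee atTop (𝓝 0) :=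
    tendsto_pow_atTop_nhds_zero_of_lt_one (by norm_num) (by norm_num)
  have hchoice : ∀ n, ∃ zz ∈ K n, dist x zz < d n + ee n := fun n =>
    (Metric.infDist_lt_iff (hne n)).1 (lt_add_of_pos_right _ (heepos n))
  choose xs hxs hxsd using hchoice
  have key : ∀ n m, n ≤ m → dist (xs n) (xs m)
      ≤ Real.sqrt (2*(d n + ee n)^2 + 2*(F + a n + 2*ee n)^2 - 4*(d n)^2)
        + (a n - α) + ee n := by
    intro n m hnm
    obtain ⟨p, hp, hpd⟩ := (Metric.infDist_lt_iff (hne n)).1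
      (lt_of_le_of_lt (hexc n m hnm (xs m) (hxs m)) (lt_add_of_pos_right _ (heepos n)))
    have hmid : (2⁻¹:ℝ) • (xs n) + (2⁻¹:ℝ) • p ∈ K n :=
      hcv n (hxs n) hp (by norm_num) (by norm_num) (by norm_num)
    have hdn_mid : d n ≤ dist x ((2⁻¹:ℝ) • xs n + (2⁻¹:ℝ) • p) := infDist_le_dist_of_mem hmid
    have hpar : dist (xs n) p ^ 2 = 2*dist x (xs n)^2 + 2*dist x p^2
        - 4 * dist x ((2⁻¹:ℝ) • xs n + (2⁻¹:ℝ) • p)^2 := by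
      have h1 := parallelogram_law_with_norm ℝ (x - xs n) (x - p)
      have e1 : x - xs n + (x - p) = (2:ℝ) • (x - ((2⁻¹:ℝ) • xs n + (2⁻¹:ℝ) • p)) := by
        module
      have e2 : x - xs n - (x - p) = p - xs n := by abel
      rw [e1, e2, norm_smul] at h1
      simp only [Real.norm_ofNat] at h1
      rw [dist_eq_norm, dist_eq_norm, dist_eq_norm, dist_eq_norm]
      rw [show ‖xs n - p‖ = ‖p - xs n‖ from norm_sub_rev _ _]
      nlinarith [h1]
    have heem : ee m ≤ ee n := pow_le_pow_of_le_one (by norm_num) (by norm_num) hnm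
    have hxp : dist x p ≤ F + a n + 2 * ee n := by
      have hfm : f m ≤ F := hfF m
      have hfm' : d m - a m ≤ F := by simpa [hff] using hfm
      calc dist x p ≤ dist x (xs m) + dist (xs m) p := dist_triangle _ _ _
        _ ≤ (d m + ee m) + ((a n - a m) + ee n) := add_le_add (hxsd m).le hpd.le
        _ ≤ F + a n + 2*ee n := by linarith
    have hQ : dist (xs n) p ^ 2 ≤ 2*(d n + ee n)^2 + 2*(F + a n + 2*ee n)^2 - 4*(d n)^2 := by
      have h2 : dist x (xs n) ≤ d n + ee n := (hxsd n).le
      have hd0 : 0 ≤ d n := infDist_nonneg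
      have hp0 : (0:ℝ) ≤ dist x p := dist_nonneg
      have hxn0 : (0:ℝ) ≤ dist x (xs n) := dist_nonneg
      have hee0 : 0 < ee n := heepos n
      nlinarith [hpar, hdn_mid, hxp]
    have hsq : dist (xs n) p
        ≤ Real.sqrt (2*(d n + ee n)^2 + 2*(F + a n + 2*ee n)^2 - 4*(d n)^2) := by
      have h3 : dist (xs n) p = Real.sqrt (dist (xs n) p ^ 2) := (Real.sqrt_sq dist_nonneg).symm
      rw [h3]
      exact Real.sqrt_le_sqrt hQ
    calc dist (xs n) (xs m) ≤ dist (xs n) p + dist p (xs m) := dist_triangle _ _ _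
      _ ≤ Real.sqrt (2*(d n + ee n)^2 + 2*(F + a n + 2*ee n)^2 - 4*(d n)^2)
          + ((a n - a m) + ee n) := by
          refine add_le_add hsq ?_
          rw [dist_comm]
          exact hpd.le
      _ ≤ _ := by
          have := hα_le m
          linarith
  set bfun : ℕ → ℝ := fun n =>
    Real.sqrt (2*(d n + ee n)^2 + 2*(F + a n + 2*ee n)^2 - 4*(d n)^2) + (a n - α) + ee n
    with hbfun
  have hbT : Tendsto bfun atTop (𝓝 0) := by
    have hQT : Tendsto (fun n => 2*(d n + ee n)^2 + 2*(F + a n + 2*ee n)^2 - 4*(d n)^2)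
        atTop (𝓝 (2*((F + α) + 0)^2 + 2*(F + α + 2*0)^2 - 4*(F + α)^2)) := by
      exact ((((hdT.add heeT).pow 2).const_mul 2).add
        ((((tendsto_const_nhds.add hα).add (heeT.const_mul 2)).pow 2).const_mul 2)).sub
        ((hdT.pow 2).const_mul 4)
    have hQT0 : Tendsto (fun n => 2*(d n + ee n)^2 + 2*(F + a n + 2*ee n)^2 - 4*(d n)^2)
        atTop (𝓝 0) := by
      have : (2*((F + α) + 0)^2 + 2*(F + α + 2*0)^2 - 4*(F + α)^2) = 0 := by ring
      rwa [this] at hQT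
    have hsqrtT : Tendsto (fun n =>
        Real.sqrt (2*(d n + ee n)^2 + 2*(F + a n + 2*ee n)^2 - 4*(d n)^2)) atTop (𝓝 0) := by
      have := (Real.continuous_sqrt.tendsto 0).comp hQT0
      rw [Real.sqrt_zero] at this; exact this
    have h4 : Tendsto bfun atTop (𝓝 (0 + (α - α) + 0)) :=
      (hsqrtT.add (hα.sub_const α)).add heeT
    simpa using h4
  have hcauchy : CauchySeq xs := by
    rw [Metric.cauchySeq_iff']
    intro δ hδ
    obtain ⟨N, hN⟩ := (Metric.tendsto_atTop.1 hbT) δ hδ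
    refine ⟨N, fun n hn => ?_⟩
    have h5 := hN N (le_refl N)
    rw [Real.dist_eq, sub_zero] at h5
    calc dist (xs n) (xs N) = dist (xs N) (xs n) := dist_comm _ _
      _ ≤ bfun N := key N n hn
      _ ≤ |bfun N| := le_abs_self _
      _ < δ := h5
  obtain ⟨y, hy⟩ := cauchySeq_tendsto_of_complete hcauchy
  refine ⟨y, fun n => ?_, ?_⟩
  · have hev : ∀ᶠ m in atTop, infDist y (K n) ≤ dist y (xs m) + (a n - a m) := by
      filter_upwards [eventually_ge_atTop n] with m hm
      calc infDist y (K n) ≤ infDist (xs m) (K n) + dist y (xs m) := infDist_le_infDist_add_dist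
        _ ≤ (a n - a m) + dist y (xs m) := add_le_add_left (hexc n m hm (xs m) (hxs m)) _
        _ = dist y (xs m) + (a n - a m) := add_comm _ _
    have hT : Tendsto (fun m => dist y (xs m) + (a n - a m)) atTop (𝓝 (0 + (a n - α))) := by
      have h6 : Tendsto (fun m => dist y (xs m)) atTop (𝓝 (dist y y)) :=
        tendsto_const_nhds.dist hy
      rw [dist_self] at h6
      exact h6.add (tendsto_const_nhds.sub hα)
    have := _root_.ge_of_tendsto hT hev
    linarith
  · have hev : ∀ᶠ n in atTop, dist x y ≤ (d n + ee n) + dist (xs n) y :=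
      Eventually.of_forall fun n =>
        (dist_triangle x (xs n) y).trans (add_le_add_left (hxsd n).le _)
    have hT : Tendsto (fun n => (d n + ee n) + dist (xs n) y) atTop (𝓝 ((F + α + 0) + 0)) := by
      have h6 : Tendsto (fun n => dist (xs n) y) atTop (𝓝 (dist y y)) :=
        hy.dist tendsto_const_nhds
      rw [dist_self] at h6
      exact (hdT.add heeT).add h6
    have := _root_.ge_of_tendsto hT hev
    linarith

lemma leftpt [CompleteSpace H] {K : ℕ → Set H} (hne : ∀ n, (K n).Nonempty)
    {a : ℕ → ℝ} {α : ℝ} (ha : Monotone a) (hα : Tendsto a atTop (𝓝 α))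
    (hexc : ∀ n m : ℕ, n ≤ m → ∀ z ∈ K n, infDist z (K m) ≤ a m - a n)
    (z : H) (hz : z ∈ K 0) {ε : ℝ} (hε : 0 < ε) :
    ∃ (xs : ℕ → H) (y : H), (∀ n, xs n ∈ K n) ∧ xs 0 = z ∧
      (∀ n, dist (xs n) y ≤ (α - a n) + ε * (2⁻¹:ℝ)^n) := by
  have hα_ge : ∀ n, a n ≤ α := fun n =>
    ge_of_tendsto hα (eventually_atTop.2 ⟨n, fun m hm => ha hm⟩)
  have hstep : ∀ (n : ℕ) (w : H), w ∈ K n →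
      ∃ w', w' ∈ K (n+1) ∧ dist w w' ≤ (a (n+1) - a n) + ε * (2⁻¹:ℝ)^(n+1) := by
    intro n w hw
    have h1 : infDist w (K (n+1)) ≤ a (n+1) - a n := hexc n (n+1) (Nat.le_succ n) w hw
    have h2 : infDist w (K (n+1)) < (a (n+1) - a n) + ε*(2⁻¹:ℝ)^(n+1) :=
      lt_of_le_of_lt h1 (lt_add_of_pos_right _ (by positivity))
    obtain ⟨w', hw', hdw⟩ := (Metric.infDist_lt_iff (hne (n+1))).1 h2
    exact ⟨w', hw', hdw.le⟩
  let T : ∀ n, {w : H // w ∈ K n} := fun n =>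
    Nat.rec ⟨z, hz⟩ (fun k p => ⟨(hstep k p.1 p.2).choose, (hstep k p.1 p.2).choose_spec.1⟩) n
  set xs : ℕ → H := fun n => (T n).1 with hxsdef
  have hmem : ∀ n, xs n ∈ K n := fun n => (T n).2
  have hxs0 : xs 0 = z := rfl
  have hstep' : ∀ n, dist (xs n) (xs (n+1)) ≤ (a (n+1) - a n) + ε * (2⁻¹:ℝ)^(n+1) :=
    fun n => (hstep n (T n).1 (T n).2).choose_spec.2
  have tele : ∀ n m, n ≤ m →
      dist (xs n) (xs m) ≤ (a m - a n) + ε*((2⁻¹:ℝ)^n - (2⁻¹:ℝ)^m) := by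
    intro n m hnm
    induction m, hnm using Nat.le_induction with
    | base => simp
    | succ m hm ih =>
      calc dist (xs n) (xs (m+1)) ≤ dist (xs n) (xs m) + dist (xs m) (xs (m+1)) :=
            dist_triangle _ _ _
        _ ≤ ((a m - a n) + ε*((2⁻¹:ℝ)^n - (2⁻¹:ℝ)^m))
            + ((a (m+1) - a m) + ε * (2⁻¹:ℝ)^(m+1)) := add_le_add ih (hstep' m)
        _ = (a (m+1) - a n) + ε*((2⁻¹:ℝ)^n - (2⁻¹:ℝ)^(m+1)) := by rw [pow_succ]; ring
  have hbT : Tendsto (fun n => (α - a n) + ε*(2⁻¹:ℝ)^n) atTop (𝓝 0) := by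
    have h1 : Tendsto (fun n : ℕ => (2⁻¹:ℝ)^n) atTop (𝓝 0) :=
      tendsto_pow_atTop_nhds_zero_of_lt_one (by norm_num) (by norm_num)
    have h2 : Tendsto (fun n => (α - a n) + ε*(2⁻¹:ℝ)^n) atTop (𝓝 ((α - α) + ε*0)) :=
      (tendsto_const_nhds.sub hα).add (h1.const_mul ε)
    simpa using h2
  have hcauchy : CauchySeq xs := by
    rw [Metric.cauchySeq_iff']
    intro δ hδ
    obtain ⟨N, hN⟩ := (Metric.tendsto_atTop.1 hbT) δ hδ
    refine ⟨N, fun n hn => ?_⟩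
    have h5 := hN N (le_refl N)
    rw [Real.dist_eq, sub_zero] at h5
    have h6 : dist (xs n) (xs N) ≤ (α - a N) + ε*(2⁻¹:ℝ)^N := by
      rw [dist_comm]
      refine (tele N n hn).trans ?_
      have h7 : a n ≤ α := hα_ge n
      have h8 : (0:ℝ) < (2⁻¹:ℝ)^n := by positivity
      nlinarith
    calc dist (xs n) (xs N) ≤ (α - a N) + ε*(2⁻¹:ℝ)^N := h6
      _ ≤ |(α - a N) + ε*(2⁻¹:ℝ)^N| := le_abs_self _
      _ < δ := h5
  obtain ⟨y, hy⟩ := cauchySeq_tendsto_of_complete hcauchy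
  refine ⟨xs, y, hmem, hxs0, fun n => ?_⟩
  have hev : ∀ᶠ m in atTop, dist (xs n) (xs m) ≤ (α - a n) + ε*(2⁻¹:ℝ)^n := by
    filter_upwards [eventually_ge_atTop n] with m hm
    refine (tele n m hm).trans ?_
    have h7 : a m ≤ α := hα_ge m
    have h8 : (0:ℝ) < (2⁻¹:ℝ)^m := by positivity
    nlinarith
  have hT : Tendsto (fun m => dist (xs n) (xs m)) atTop (𝓝 (dist (xs n) y)) :=
    tendsto_const_nhds.dist hy
  exact le_of_tendsto hT hev

end AuxPoints

section MainSides

lemma right_side [CompleteSpace H] {I : Set ℝ} (hI : I.OrdConnected)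
    {C : ℝ → Set H} (hC : ∀ r ∈ I, IsConvexBody (C r))
    {L : ℝ → ℝ} (hL0 : ∀ r ∈ I, 0 ≤ L r)
    (hL : ∀ r ∈ I, ENNReal.ofReal (L r) = ret C (I ∩ Iic r))
    {t : ℝ} (ht : t ∈ I) :
    IsConvexBody (rightLimSetOn C I t) ∧
    (excess (C t) (rightLimSetOn C I t) = ENNReal.ofReal (rlimOn L I t - L t) ∧
      Tendsto (fun s => excess (C t) (C s)) (𝓝[I ∩ Ioi t] t)
        (𝓝 (ENNReal.ofReal (rlimOn L I t - L t)))) ∧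
    (Tendsto (fun s => excess (C t) (C s)) (𝓝[I ∩ Ioi t] t) (𝓝 0) ↔
      C t ⊆ rightLimSetOn C I t) := by
  by_cases hS : (I ∩ Ioi t).Nonempty
  swap
  · rw [rightLimSetOn, if_neg hS, rlimOn, if_neg hS]
    have hSempty : I ∩ Ioi t = ∅ := not_nonempty_iff_eq_empty.1 hS
    have hbot : 𝓝[I ∩ Ioi t] t = ⊥ := by rw [hSempty]; exact nhdsWithin_empty t
    refine ⟨hC t ht, ⟨?_, ?_⟩, ?_⟩
    · rw [sub_self, ENNReal.ofReal_zero, excess_subset_zero subset_rfl]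
    · rw [hbot]; exact tendsto_bot
    · exact iff_of_true (by rw [hbot]; exact tendsto_bot) subset_rfl
  obtain ⟨s₀, hs₀⟩ := hS
  have hS : (I ∩ Ioi t).Nonempty := ⟨s₀, hs₀⟩
  rw [rightLimSetOn, if_pos hS, rlimOn, if_pos hS]
  set A := {x : H | Tendsto (fun s => infDist x (C s)) (𝓝[I ∩ Ioi t] t) (𝓝 0)} with hA
  set lL := sInf (L '' (I ∩ Ioi t)) with hlL
  have hs₀t : t < s₀ := hs₀.2
  have hIoc : Ioc t s₀ ⊆ I ∩ Ioi t := fun r hr =>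
    ⟨hI.out ht hs₀.1 ⟨hr.1.le, hr.2⟩, hr.1⟩
  haveI hNB : (𝓝[I ∩ Ioi t] t).NeBot := by
    have h1 : (𝓝[Ioc t s₀] t).NeBot := by
      apply mem_closure_iff_nhdsWithin_neBot.1
      rw [closure_Ioc (ne_of_lt hs₀t)]
      exact ⟨le_refl t, hs₀t.le⟩
    exact neBot_of_le (nhdsWithin_mono t hIoc)
  have hbdd : BddBelow (L '' (I ∩ Ioi t)) := ⟨L t, by
    rintro y ⟨r, hr, rfl⟩
    exact L_mono hL0 hL ht hr.1 (le_of_lt hr.2)⟩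
  have hlLle : ∀ r ∈ I ∩ Ioi t, lL ≤ L r := fun r hr => csInf_le hbdd ⟨r, hr, rfl⟩
  have hLtlL : L t ≤ lL := le_csInf (hS.image L) (by
    rintro y ⟨r, hr, rfl⟩
    exact L_mono hL0 hL ht hr.1 (le_of_lt hr.2))
  have hlam0 : 0 ≤ lL - L t := sub_nonneg.2 hLtlL
  have hLT : Tendsto L (𝓝[I ∩ Ioi t] t) (𝓝 lL) := by
    rw [Metric.tendsto_nhds]
    intro ε hε
    obtain ⟨y, ⟨s₁, hs₁, rfl⟩, hy⟩ :=
      exists_lt_of_csInf_lt (hS.image L) (lt_add_of_pos_right lL hε)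
    filter_upwards [self_mem_nhdsWithin, nhdsWithin_le_nhds (Iio_mem_nhds hs₁.2)] with r hrS hrlt
    rw [Real.dist_eq, abs_of_nonneg (sub_nonneg.2 (hlLle r hrS))]
    have h2 : L r ≤ L s₁ := L_mono hL0 hL hrS.1 hs₁.1 (le_of_lt hrlt)
    linarith
  have hF3 : ∀ (x : H) (p q : ℝ), p ∈ I → q ∈ I → p ≤ q →
      infDist x (C q) ≤ infDist x (C p) + (L q - L p) := by
    intro x p q hp hq hpq
    refine le_of_forall_pos_le_add fun δ hδ => ?_
    obtain ⟨z, hz, hxz⟩ := (Metric.infDist_lt_iff (hC p hp).1).1 (lt_add_of_pos_right _ hδ)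
    have h1 : infDist z (C q) ≤ L q - L p := by
      have hfin := excess_ne_top_L hL0 hL hp hq hpq
      have h2 := infDist_le_toReal_excess hfin hz
      have h3 := toReal_excess_le_L hL0 hL hp hq hpq
      linarith
    calc infDist x (C q) ≤ infDist z (C q) + dist x z := infDist_le_infDist_add_dist
      _ ≤ (L q - L p) + (infDist x (C p) + δ) := add_le_add h1 hxz.le
      _ = infDist x (C p) + (L q - L p) + δ := by ring
  set UB := {y : H | ∀ r ∈ I ∩ Ioi t, infDist y (C r) ≤ L r - lL} with hUB
  have hUBsubA : UB ⊆ A := by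
    intro y hy
    rw [hA]; simp only [Set.mem_setOf_eq]
    have hg : Tendsto (fun r => L r - lL) (𝓝[I ∩ Ioi t] t) (𝓝 0) := by
      have h2 : Tendsto (fun r => L r - lL) (𝓝[I ∩ Ioi t] t) (𝓝 (lL - lL)) :=
        hLT.sub_const lL
      simpa using h2
    have hfg : ∀ᶠ r in 𝓝[I ∩ Ioi t] t, infDist y (C r) ≤ L r - lL := by
      filter_upwards [self_mem_nhdsWithin] with r hr
      exact hy r hr
    exact squeeze_zero' (Eventually.of_forall fun r => infDist_nonneg) hfg hg
  have hAsubUB : A ⊆ UB := by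
    intro y hy r hr
    have hev : ∀ᶠ p in 𝓝[I ∩ Ioi t] t,
        infDist y (C r) ≤ infDist y (C p) + (L r - L p) := by
      filter_upwards [self_mem_nhdsWithin, nhdsWithin_le_nhds (Iio_mem_nhds hr.2)] with p hpS hplt
      exact hF3 y p r hpS.1 hr.1 (le_of_lt hplt)
    have hTT : Tendsto (fun p => infDist y (C p) + (L r - L p)) (𝓝[I ∩ Ioi t] t)
        (𝓝 (0 + (L r - lL))) := hy.add (tendsto_const_nhds.sub hLT)
    have h5 := _root_.ge_of_tendsto hTT hev
    linarith
  have hAeq : A = UB := Subset.antisymm hAsubUB hUBsubA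
  set sn : ℕ → ℝ := fun n => t + (s₀ - t) * ((n : ℝ) + 1)⁻¹ with hsn
  have hsnt : ∀ n, t < sn n := fun n => by
    rw [hsn]
    have h1 : 0 < (s₀ - t) * ((n : ℝ) + 1)⁻¹ := by
      apply mul_pos (sub_pos.2 hs₀t)
      positivity
    simpa using h1
  have hsns₀ : ∀ n, sn n ≤ s₀ := fun n => by
    rw [hsn]
    have h0 : (1:ℝ) ≤ (n : ℝ) + 1 := by
      have h00 : (0:ℝ) ≤ (n : ℝ) := Nat.cast_nonneg n
      linarith
    have h1 : (s₀ - t) * ((n : ℝ) + 1)⁻¹ ≤ (s₀ - t) * 1 :=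
      mul_le_mul_of_nonneg_left (inv_le_one_of_one_le₀ h0) (sub_pos.2 hs₀t).le
    simp only at h1 ⊢
    linarith
  have hsnS : ∀ n, sn n ∈ I ∩ Ioi t := fun n => hIoc ⟨hsnt n, hsns₀ n⟩
  have hsnmono : ∀ n m : ℕ, n ≤ m → sn m ≤ sn n := by
    intro n m hnm
    rw [hsn]
    simp only
    have h1 : ((m : ℝ) + 1)⁻¹ ≤ ((n : ℝ) + 1)⁻¹ := by
      gcongr <;> exact_mod_cast hnm
    nlinarith [sub_pos.2 hs₀t]
  have hsnT : Tendsto sn atTop (𝓝 t) := by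
    have h1 : Tendsto (fun n : ℕ => ((n : ℝ) + 1)⁻¹) atTop (𝓝 0) := by
      have := tendsto_one_div_add_atTop_nhds_zero_nat (𝕜 := ℝ)
      simpa [one_div] using this
    have h2 : Tendsto (fun n : ℕ => t + (s₀ - t) * ((n : ℝ) + 1)⁻¹) atTop
        (𝓝 (t + (s₀ - t) * 0)) := tendsto_const_nhds.add (h1.const_mul (s₀ - t))
    simpa using h2
  have haT : Tendsto (fun n => L (sn n)) atTop (𝓝 lL) := by
    rw [Metric.tendsto_atTop]
    intro ε hε
    obtain ⟨y, ⟨s₁, hs₁, rfl⟩, hy⟩ :=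
      exists_lt_of_csInf_lt (hS.image L) (lt_add_of_pos_right lL hε)
    obtain ⟨N, hN⟩ := eventually_atTop.1 (hsnT.eventually (eventually_lt_nhds hs₁.2))
    refine ⟨N, fun n hn => ?_⟩
    rw [Real.dist_eq, abs_of_nonneg (sub_nonneg.2 (hlLle _ (hsnS n)))]
    have h2 : L (sn n) ≤ L s₁ := L_mono hL0 hL (hsnS n).1 hs₁.1 (le_of_lt (hN n hn))

    linarith
  have hamono : Antitone (fun n => L (sn n)) := fun n m hnm =>
    L_mono hL0 hL (hsnS m).1 (hsnS n).1 (hsnmono n m hnm)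
  have hexcseq : ∀ n m : ℕ, n ≤ m → ∀ z ∈ C (sn m),
      infDist z (C (sn n)) ≤ L (sn n) - L (sn m) := by
    intro n m hnm z hz
    have h1 := hF3 z (sn m) (sn n) (hsnS m).1 (hsnS n).1 (hsnmono n m hnm)
    rw [infDist_zero_of_mem hz] at h1
    linarith
  have hpoint : ∀ x ∈ C t, ∃ y ∈ UB, dist x y ≤ lL - L t := by
    intro x hx
    obtain ⟨y, hy1, hy2⟩ := rightpt (fun n => (hC _ (hsnS n).1).1)
      (fun n => (hC _ (hsnS n).1).2.2) hamono haT hexcseq x (c := L t) (fun n => by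
        have h1 := hF3 x t (sn n) ht (hsnS n).1 (hsnt n).le
        rw [infDist_zero_of_mem hx] at h1
        linarith)
    refine ⟨y, ?_, hy2⟩
    intro r hr
    obtain ⟨n, hn⟩ := (hsnT.eventually (eventually_lt_nhds hr.2)).exists
    have h2 := hF3 y (sn n) r (hsnS n).1 hr.1 (le_of_lt hn)
    have h3 := hy1 n
    linarith
  have hUBclosed : IsClosed UB := by
    have h1 : UB = ⋂ r ∈ I ∩ Ioi t, {y : H | infDist y (C r) ≤ L r - lL} := by
      ext y
      simp [hUB, Set.mem_iInter₂]
    rw [h1]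
    exact isClosed_biInter fun r hr =>
      isClosed_le (Metric.continuous_infDist_pt _) continuous_const
  have hUBconvex : Convex ℝ UB := by
    intro y hy z hz av bv hav hbv habv
    simp only [hUB, Set.mem_setOf_eq] at hy hz ⊢
    intro r hr
    have h1 := infDist_combo (hC r hr.1).2.2 (hC r hr.1).1 y z hav hbv habv
    have h2 := hy r hr
    have h3 := hz r hr
    calc infDist (av • y + bv • z) (C r) ≤ av * infDist y (C r) + bv * infDist z (C r) := h1
      _ ≤ av * (L r - lL) + bv * (L r - lL) :=
          add_le_add (mul_le_mul_of_nonneg_left h2 hav) (mul_le_mul_of_nonneg_left h3 hbv)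
      _ = L r - lL := by rw [← add_mul, habv, one_mul]
  have hUBne : UB.Nonempty := by
    obtain ⟨x, hx⟩ := (hC t ht).1
    obtain ⟨y, hy, _⟩ := hpoint x hx
    exact ⟨y, hy⟩
  have hbodyA : IsConvexBody A := by
    rw [hAeq]; exact ⟨hUBne, hUBclosed, hUBconvex⟩
  have hptA : ∀ x ∈ C t, infDist x A ≤ lL - L t := by
    intro x hx
    obtain ⟨y, hy, hd⟩ := hpoint x hx
    exact le_trans (infDist_le_dist_of_mem (by rw [hAeq]; exact hy)) hd
  have hle : excess (C t) A ≤ ENNReal.ofReal (lL - L t) :=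
    excess_le_ofReal hbodyA.1 hptA
  have hfinA : ∀ r ∈ I ∩ Ioi t, excess (C t) (C r) ≠ ⊤ := fun r hr =>
    excess_ne_top_L hL0 hL ht hr.1 (le_of_lt hr.2)
  have hTreal : Tendsto (fun r => (excess (C t) (C r)).toReal) (𝓝[I ∩ Ioi t] t)
      (𝓝 (lL - L t)) := by
    rw [Metric.tendsto_nhds]
    intro ε hε
    obtain ⟨u₁, hu₁, hu₁e⟩ := exists_right_lower hL0 hL ht hs₀.1 hs₀t (half_pos hε)
    obtain ⟨y, ⟨s₁, hs₁, rfl⟩, hy⟩ :=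
      exists_lt_of_csInf_lt (hS.image L) (lt_add_of_pos_right lL (half_pos hε))
    filter_upwards [self_mem_nhdsWithin, nhdsWithin_le_nhds (Iio_mem_nhds hu₁.2.1),
      nhdsWithin_le_nhds (Iio_mem_nhds hs₁.2)] with r hrS hru hrs
    have hrI : r ∈ I := hrS.1
    have hrt : t < r := hrS.2
    have hru' : r < u₁ := hru
    have hrs' : r < s₁ := hrs
    have hup : (excess (C t) (C r)).toReal ≤ L r - L t :=
      toReal_excess_le_L hL0 hL ht hrI hrt.le
    have hrs₁ : L r ≤ L s₁ := L_mono hL0 hL hrI hs₁.1 hrs'.le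
    have hlLr : lL ≤ L r := hlLle r hrS
    have hfin1 : excess (C t) (C r) ≠ ⊤ := hfinA r hrS
    have hfin2 : excess (C r) (C u₁) ≠ ⊤ := excess_ne_top_L hL0 hL hrI hu₁.1 hru'.le
    have htriR : (excess (C t) (C u₁)).toReal
        ≤ (excess (C t) (C r)).toReal + (excess (C r) (C u₁)).toReal := by
      have h9 := ENNReal.toReal_mono (ENNReal.add_ne_top.2 ⟨hfin1, hfin2⟩)
        (excess_triangle (C t) (C r) (C u₁))
      rwa [ENNReal.toReal_add hfin1 hfin2] at h9
    have h10 : (excess (C r) (C u₁)).toReal ≤ L u₁ - L r :=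
      toReal_excess_le_L hL0 hL hrI hu₁.1 hru'.le
    rw [Real.dist_eq, abs_lt]
    constructor
    · linarith
    · linarith
  have hTe : Tendsto (fun r => excess (C t) (C r)) (𝓝[I ∩ Ioi t] t)
      (𝓝 (ENNReal.ofReal (lL - L t))) := by
    refine Filter.Tendsto.congr' ?_ (ENNReal.tendsto_ofReal hTreal)
    filter_upwards [self_mem_nhdsWithin] with r hr
    exact ENNReal.ofReal_toReal (hfinA r hr)
  have hgeA : ENNReal.ofReal (lL - L t) ≤ excess (C t) A := by
    have hub : ∀ᶠ r in 𝓝[I ∩ Ioi t] t,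
        excess (C t) (C r) ≤ excess (C t) A + ENNReal.ofReal (L r - lL) := by
      filter_upwards [self_mem_nhdsWithin] with r hr
      have h1 : excess A (C r) ≤ ENNReal.ofReal (L r - lL) :=
        excess_le_ofReal (hC r hr.1).1 (fun y hy => by rw [hAeq] at hy; exact hy r hr)
      exact le_trans (excess_triangle (C t) A (C r)) (add_le_add_right h1 _)
    have hTrhs : Tendsto (fun r => excess (C t) A + ENNReal.ofReal (L r - lL))
        (𝓝[I ∩ Ioi t] t) (𝓝 (excess (C t) A + ENNReal.ofReal 0)) := by
      refine Tendsto.add tendsto_const_nhds (ENNReal.tendsto_ofReal ?_)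
      have h2 := hLT.sub_const lL
      simpa using h2
    have h3 := le_of_tendsto_of_tendsto hTe hTrhs hub
    simpa using h3
  have hexeq : excess (C t) A = ENNReal.ofReal (lL - L t) := le_antisymm hle hgeA
  refine ⟨hbodyA, ⟨hexeq, hTe⟩, ?_, ?_⟩
  · intro h0
    have huniq : ENNReal.ofReal (lL - L t) = 0 := tendsto_nhds_unique hTe h0
    have hlam : lL - L t = 0 := le_antisymm (ENNReal.ofReal_eq_zero.1 huniq) hlam0
    intro x hx
    have h1 := hptA x hx
    rw [hlam] at h1
    have h2 : infDist x A = 0 := le_antisymm h1 infDist_nonneg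
    have h3 : x ∈ closure A := (Metric.mem_closure_iff_infDist_zero hbodyA.1).2 h2
    rwa [hbodyA.2.1.closure_eq] at h3
  · intro hsub
    have h1 : excess (C t) A = 0 := excess_subset_zero hsub
    rw [hexeq] at h1
    rwa [h1] at hTe

end MainSides

lemma left_side [CompleteSpace H] {I : Set ℝ} (hI : I.OrdConnected)
    {C : ℝ → Set H} (hC : ∀ r ∈ I, IsConvexBody (C r))
    {L : ℝ → ℝ} (hL0 : ∀ r ∈ I, 0 ≤ L r)
    (hL : ∀ r ∈ I, ENNReal.ofReal (L r) = ret C (I ∩ Iic r))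
    {t : ℝ} (ht : t ∈ I) :
    IsConvexBody (leftLimSetOn C I t) ∧
    (excess (leftLimSetOn C I t) (C t) = ENNReal.ofReal (L t - llimOn L I t) ∧
      Tendsto (fun s => excess (C s) (C t)) (𝓝[I ∩ Iio t] t)
        (𝓝 (ENNReal.ofReal (L t - llimOn L I t)))) ∧
    (Tendsto (fun s => excess (C s) (C t)) (𝓝[I ∩ Iio t] t) (𝓝 0) ↔
      leftLimSetOn C I t ⊆ C t) := by
  by_cases hS : (I ∩ Iio t).Nonempty
  swap
  · rw [leftLimSetOn, if_neg hS, llimOn, if_neg hS]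
    have hSempty : I ∩ Iio t = ∅ := not_nonempty_iff_eq_empty.1 hS
    have hbot : 𝓝[I ∩ Iio t] t = ⊥ := by rw [hSempty]; exact nhdsWithin_empty t
    refine ⟨hC t ht, ⟨?_, ?_⟩, ?_⟩
    · rw [sub_self, ENNReal.ofReal_zero, excess_subset_zero subset_rfl]
    · rw [hbot]; exact tendsto_bot
    · exact iff_of_true (by rw [hbot]; exact tendsto_bot) subset_rfl
  obtain ⟨s₀, hs₀⟩ := hS
  have hS : (I ∩ Iio t).Nonempty := ⟨s₀, hs₀⟩
  rw [leftLimSetOn, if_pos hS, llimOn, if_pos hS]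
  set A := {x : H | Tendsto (fun s => infDist x (C s)) (𝓝[I ∩ Iio t] t) (𝓝 0)} with hA
  set lL := sSup (L '' (I ∩ Iio t)) with hlL
  have hs₀t : s₀ < t := hs₀.2
  haveI hNB : (𝓝[I ∩ Iio t] t).NeBot := by
    have hIco : Ico s₀ t ⊆ I ∩ Iio t := fun r hr =>
      ⟨hI.out hs₀.1 ht ⟨hr.1, hr.2.le⟩, hr.2⟩
    have h1 : (𝓝[Ico s₀ t] t).NeBot := by
      apply mem_closure_iff_nhdsWithin_neBot.1
      rw [closure_Ico (ne_of_lt hs₀t)]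
      exact ⟨hs₀t.le, le_refl t⟩
    exact neBot_of_le (nhdsWithin_mono t hIco)
  have hbdd : BddAbove (L '' (I ∩ Iio t)) := ⟨L t, by
    rintro y ⟨r, hr, rfl⟩
    exact L_mono hL0 hL hr.1 ht (le_of_lt hr.2)⟩
  have hlLge : ∀ r ∈ I ∩ Iio t, L r ≤ lL := fun r hr => le_csSup hbdd ⟨r, hr, rfl⟩
  have hlLLt : lL ≤ L t := csSup_le (hS.image L) (by
    rintro y ⟨r, hr, rfl⟩
    exact L_mono hL0 hL hr.1 ht (le_of_lt hr.2))
  have hlam0 : 0 ≤ L t - lL := sub_nonneg.2 hlLLt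
  have hLT : Tendsto L (𝓝[I ∩ Iio t] t) (𝓝 lL) := by
    rw [Metric.tendsto_nhds]
    intro ε hε
    obtain ⟨y, ⟨s₁, hs₁, rfl⟩, hy⟩ :=
      exists_lt_of_lt_csSup (hS.image L) (sub_lt_self lL hε)
    filter_upwards [self_mem_nhdsWithin, nhdsWithin_le_nhds (Ioi_mem_nhds hs₁.2)] with r hrS hrgt
    rw [Real.dist_eq, abs_of_nonpos (sub_nonpos.2 (hlLge r hrS)), neg_sub]
    have h2 : L s₁ ≤ L r := L_mono hL0 hL hs₁.1 hrS.1 (le_of_lt hrgt)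
    linarith
  have hF3 : ∀ (x : H) (p q : ℝ), p ∈ I → q ∈ I → p ≤ q →
      infDist x (C q) ≤ infDist x (C p) + (L q - L p) := by
    intro x p q hp hq hpq
    refine le_of_forall_pos_le_add fun δ hδ => ?_
    obtain ⟨z, hz, hxz⟩ := (Metric.infDist_lt_iff (hC p hp).1).1 (lt_add_of_pos_right _ hδ)
    have h1 : infDist z (C q) ≤ L q - L p := by
      have hfin := excess_ne_top_L hL0 hL hp hq hpq
      have h2 := infDist_le_toReal_excess hfin hz
      have h3 := toReal_excess_le_L hL0 hL hp hq hpq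
      linarith
    calc infDist x (C q) ≤ infDist z (C q) + dist x z := infDist_le_infDist_add_dist
      _ ≤ (L q - L p) + (infDist x (C p) + δ) := add_le_add h1 hxz.le
      _ = infDist x (C p) + (L q - L p) + δ := by ring
  have hpow : Tendsto (fun n : ℕ => (2⁻¹:ℝ)^n) atTop (𝓝 0) :=
    tendsto_pow_atTop_nhds_zero_of_lt_one (by norm_num) (by norm_num)
  -- construction of points of A near any point of any C s, s < t
  have hbuild : ∀ s, s ∈ I ∩ Iio t → ∀ z ∈ C s, ∀ ε : ℝ, 0 < ε →
      ∃ y ∈ A, dist z y ≤ lL - L s + ε := by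
    intro s hs z hz ε hε
    have hst : s < t := hs.2
    have hIco2 : Ico s t ⊆ I ∩ Iio t := fun r hr =>
      ⟨hI.out hs.1 ht ⟨hr.1, hr.2.le⟩, hr.2⟩
    set σ : ℕ → ℝ := fun n => t - (t - s) * ((n : ℝ) + 1)⁻¹ with hσ
    have hσ0 : σ 0 = s := by rw [hσ]; simp
    have hσlt : ∀ n, σ n < t := fun n => by
      rw [hσ]
      have h1 : 0 < (t - s) * ((n : ℝ) + 1)⁻¹ := by
        apply mul_pos (sub_pos.2 hst)
        positivity
      simp only
      linarith
    have hσge : ∀ n, s ≤ σ n := fun n => by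
      rw [hσ]
      have h0 : (1:ℝ) ≤ (n : ℝ) + 1 := by
        have h00 : (0:ℝ) ≤ (n : ℝ) := Nat.cast_nonneg n
        linarith
      have h1 : (t - s) * ((n : ℝ) + 1)⁻¹ ≤ (t - s) * 1 :=
        mul_le_mul_of_nonneg_left (inv_le_one_of_one_le₀ h0) (sub_pos.2 hst).le
      simp only
      linarith
    have hσS : ∀ n, σ n ∈ I ∩ Iio t := fun n => hIco2 ⟨hσge n, hσlt n⟩
    have hσmono : ∀ n m : ℕ, n ≤ m → σ n ≤ σ m := by
      intro n m hnm
      rw [hσ]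
      simp only
      have h1 : ((m : ℝ) + 1)⁻¹ ≤ ((n : ℝ) + 1)⁻¹ := by
        gcongr <;> exact_mod_cast hnm
      nlinarith [sub_pos.2 hst]
    have hσT : Tendsto σ atTop (𝓝 t) := by
      have h1 : Tendsto (fun n : ℕ => ((n : ℝ) + 1)⁻¹) atTop (𝓝 0) := by
        have := tendsto_one_div_add_atTop_nhds_zero_nat (𝕜 := ℝ)
        simpa [one_div] using this
      have h2 : Tendsto (fun n : ℕ => t - (t - s) * ((n : ℝ) + 1)⁻¹) atTop
          (𝓝 (t - (t - s) * 0)) := tendsto_const_nhds.sub (h1.const_mul (t - s))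
      simpa using h2
    have haT : Tendsto (fun n => L (σ n)) atTop (𝓝 lL) := by
      rw [Metric.tendsto_atTop]
      intro δ hδ
      obtain ⟨y, ⟨s₁, hs₁, rfl⟩, hy⟩ :=
        exists_lt_of_lt_csSup (hS.image L) (sub_lt_self lL hδ)
      obtain ⟨N, hN⟩ := eventually_atTop.1 (hσT.eventually (eventually_gt_nhds hs₁.2))
      refine ⟨N, fun n hn => ?_⟩
      rw [Real.dist_eq, abs_of_nonpos (sub_nonpos.2 (hlLge _ (hσS n))), neg_sub]
      have h2 : L s₁ ≤ L (σ n) := L_mono hL0 hL hs₁.1 (hσS n).1 (le_of_lt (hN n hn))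
      linarith
    have hamono : Monotone (fun n => L (σ n)) := fun n m hnm =>
      L_mono hL0 hL (hσS n).1 (hσS m).1 (hσmono n m hnm)
    have hexcσ : ∀ n m : ℕ, n ≤ m → ∀ w ∈ C (σ n),
        infDist w (C (σ m)) ≤ L (σ m) - L (σ n) := by
      intro n m hnm w hw
      have h1 := hF3 w (σ n) (σ m) (hσS n).1 (hσS m).1 (hσmono n m hnm)
      rw [infDist_zero_of_mem hw] at h1
      linarith
    obtain ⟨xs, y, hxsmem, hxs0, hxsy⟩ := leftpt (fun n => (hC _ (hσS n).1).1)
      hamono haT hexcσ z (show z ∈ C (σ 0) by rw [hσ0]; exact hz) hε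
    have hyA : y ∈ A := by
      rw [hA]
      simp only [Set.mem_setOf_eq]
      rw [Metric.tendsto_nhds]
      intro δ hδ
      have hpT : Tendsto (fun n => ε * (2⁻¹:ℝ)^n) atTop (𝓝 0) := by
        have := hpow.const_mul ε
        simpa using this
      obtain ⟨N₁, h1⟩ := Metric.tendsto_atTop.1 haT (δ/4) (by linarith)
      obtain ⟨N₂, h2⟩ := Metric.tendsto_atTop.1 hpT (δ/4) (by linarith)
      set n := max N₁ N₂ with hn
      have h1' := h1 n (le_max_left _ _)
      have h2' := h2 n (le_max_right _ _)
      rw [Real.dist_eq, abs_of_nonpos (sub_nonpos.2 (hlLge _ (hσS n))), neg_sub] at h1'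
      rw [Real.dist_eq, sub_zero, abs_of_nonneg (by positivity)] at h2'
      filter_upwards [self_mem_nhdsWithin,
        nhdsWithin_le_nhds (Ioi_mem_nhds (hσlt n))] with r hrS hrgt
      rw [Real.dist_eq, sub_zero, abs_of_nonneg infDist_nonneg]
      have h3 : infDist (xs n) (C r) ≤ L r - L (σ n) := by
        have h4 := hF3 (xs n) (σ n) r (hσS n).1 hrS.1 (le_of_lt hrgt)
        rw [infDist_zero_of_mem (hxsmem n)] at h4
        linarith
      have h5 : infDist y (C r) ≤ dist y (xs n) + infDist (xs n) (C r) := by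
        have := infDist_le_infDist_add_dist (x := y) (y := xs n) (s := C r)
        linarith
      have h6 : dist y (xs n) ≤ (lL - L (σ n)) + ε * (2⁻¹:ℝ)^n := by
        rw [dist_comm]
        exact hxsy n
      have h7 : L r ≤ lL := hlLge r hrS
      linarith
    refine ⟨y, hyA, ?_⟩
    have h8 := hxsy 0
    rw [hxs0, hσ0, pow_zero, mul_one] at h8
    exact h8
  have hAne : A.Nonempty := by
    obtain ⟨z, hz⟩ := (hC s₀ hs₀.1).1
    obtain ⟨y, hy, _⟩ := hbuild s₀ hs₀ z hz 1 one_pos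
    exact ⟨y, hy⟩
  have hAclosed : IsClosed A := by
    rw [hA]
    refine isClosed_of_closure_subset fun x hx => ?_
    simp only [Set.mem_setOf_eq]
    rw [Metric.tendsto_nhds]
    intro δ hδ
    obtain ⟨x', hx', hdx⟩ := Metric.mem_closure_iff.1 hx (δ/2) (half_pos hδ)
    have hx'T : Tendsto (fun s => infDist x' (C s)) (𝓝[I ∩ Iio t] t) (𝓝 0) := hx'
    filter_upwards [hx'T.eventually (eventually_lt_nhds (half_pos hδ))] with r hr
    rw [Real.dist_eq, sub_zero, abs_of_nonneg infDist_nonneg]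
    calc infDist x (C r) ≤ infDist x' (C r) + dist x x' := infDist_le_infDist_add_dist
      _ < δ/2 + δ/2 := add_lt_add hr hdx
      _ = δ := add_halves δ
  have hAconvex : Convex ℝ A := by
    rw [hA]
    intro y hy z hz av bv hav hbv habv
    simp only [Set.mem_setOf_eq] at hy hz ⊢
    have hg : Tendsto (fun r => av * infDist y (C r) + bv * infDist z (C r))
        (𝓝[I ∩ Iio t] t) (𝓝 0) := by
      have := (hy.const_mul av).add (hz.const_mul bv)
      simpa using this
    refine squeeze_zero' (Eventually.of_forall fun r => infDist_nonneg) ?_ hg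
    filter_upwards [self_mem_nhdsWithin] with r hr
    exact infDist_combo (hC r hr.1).2.2 (hC r hr.1).1 y z hav hbv habv
  have hbodyA : IsConvexBody A := ⟨hAne, hAclosed, hAconvex⟩
  have hptA : ∀ y ∈ A, infDist y (C t) ≤ L t - lL := by
    intro y hy
    have hy' : Tendsto (fun s => infDist y (C s)) (𝓝[I ∩ Iio t] t) (𝓝 0) := hy
    have hev : ∀ᶠ r in 𝓝[I ∩ Iio t] t,
        infDist y (C t) ≤ infDist y (C r) + (L t - L r) := by
      filter_upwards [self_mem_nhdsWithin] with r hr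
      exact hF3 y r t hr.1 ht (le_of_lt hr.2)
    have hTT : Tendsto (fun r => infDist y (C r) + (L t - L r)) (𝓝[I ∩ Iio t] t)
        (𝓝 (0 + (L t - lL))) := hy'.add (tendsto_const_nhds.sub hLT)
    have h5 := _root_.ge_of_tendsto hTT hev
    linarith
  have hle : excess A (C t) ≤ ENNReal.ofReal (L t - lL) :=
    excess_le_ofReal (hC t ht).1 hptA
  have hfinexA : excess A (C t) ≠ ⊤ := ne_top_of_le_ne_top ENNReal.ofReal_ne_top hle
  have hfinA : ∀ r ∈ I ∩ Iio t, excess (C r) (C t) ≠ ⊤ := fun r hr =>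
    excess_ne_top_L hL0 hL hr.1 ht (le_of_lt hr.2)
  have hTreal : Tendsto (fun r => (excess (C r) (C t)).toReal) (𝓝[I ∩ Iio t] t)
      (𝓝 (L t - lL)) := by
    rw [Metric.tendsto_nhds]
    intro ε hε
    obtain ⟨u₁, hu₁, hu₁e⟩ := exists_left_lower hL0 hL ht hs₀ (half_pos hε)
    obtain ⟨y, ⟨s₁, hs₁, rfl⟩, hy⟩ :=
      exists_lt_of_lt_csSup (hS.image L) (sub_lt_self lL (half_pos hε))
    filter_upwards [self_mem_nhdsWithin, nhdsWithin_le_nhds (Ioi_mem_nhds hu₁.2),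
      nhdsWithin_le_nhds (Ioi_mem_nhds hs₁.2)] with r hrS hru hrs
    have hrI : r ∈ I := hrS.1
    have hrt : r < t := hrS.2
    have hru' : u₁ < r := hru
    have hrs' : s₁ < r := hrs
    have hup : (excess (C r) (C t)).toReal ≤ L t - L r :=
      toReal_excess_le_L hL0 hL hrI ht hrt.le
    have hrs₁ : L s₁ ≤ L r := L_mono hL0 hL hs₁.1 hrI hrs'.le
    have hlLr : L r ≤ lL := hlLge r hrS
    have hfin1 : excess (C u₁) (C r) ≠ ⊤ := excess_ne_top_L hL0 hL hu₁.1 hrI hru'.le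
    have hfin2 : excess (C r) (C t) ≠ ⊤ := hfinA r hrS
    have htriR : (excess (C u₁) (C t)).toReal
        ≤ (excess (C u₁) (C r)).toReal + (excess (C r) (C t)).toReal := by
      have h9 := ENNReal.toReal_mono (ENNReal.add_ne_top.2 ⟨hfin1, hfin2⟩)
        (excess_triangle (C u₁) (C r) (C t))
      rwa [ENNReal.toReal_add hfin1 hfin2] at h9
    have h10 : (excess (C u₁) (C r)).toReal ≤ L r - L u₁ :=
      toReal_excess_le_L hL0 hL hu₁.1 hrI hru'.le
    rw [Real.dist_eq, abs_lt]
    constructor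
    · linarith
    · linarith
  have hTe : Tendsto (fun r => excess (C r) (C t)) (𝓝[I ∩ Iio t] t)
      (𝓝 (ENNReal.ofReal (L t - lL))) := by
    refine Filter.Tendsto.congr' ?_ (ENNReal.tendsto_ofReal hTreal)
    filter_upwards [self_mem_nhdsWithin] with r hr
    exact ENNReal.ofReal_toReal (hfinA r hr)
  have hge : ENNReal.ofReal (L t - lL) ≤ excess A (C t) := by
    have hkey : ∀ ε : ℝ, 0 < ε → L t - lL ≤ (excess A (C t)).toReal + 4*ε := by
      intro ε hε
      rcases le_or_gt (L t - lL) 0 with hneg | hpos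
      · have := ENNReal.toReal_nonneg (a := excess A (C t))
        linarith
      have hev1 := (Metric.tendsto_nhds.1 hTreal) ε hε
      have hev2 : ∀ᶠ r in 𝓝[I ∩ Iio t] t, lL - ε < L r :=
        hLT.eventually (eventually_gt_nhds (by linarith))
      obtain ⟨r, hr1, hr2, hrS⟩ := (hev1.and (hev2.and eventually_mem_nhdsWithin)).exists
      rw [Real.dist_eq] at hr1
      rw [abs_lt] at hr1
      rcases le_or_gt ((excess (C r) (C t)).toReal) ε with hsm | hbg
      · have := ENNReal.toReal_nonneg (a := excess A (C t))
        linarith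
      · have hfin := hfinA r hrS
        have hlt : ENNReal.ofReal ((excess (C r) (C t)).toReal - ε) < excess (C r) (C t) := by
          calc ENNReal.ofReal ((excess (C r) (C t)).toReal - ε)
              < ENNReal.ofReal ((excess (C r) (C t)).toReal) :=
                (ENNReal.ofReal_lt_ofReal_iff (by linarith)).2 (by linarith)
            _ = excess (C r) (C t) := ENNReal.ofReal_toReal hfin
        obtain ⟨z, hzmem, hz3⟩ := exists_infDist_gt hlt
        have hz4 : (excess (C r) (C t)).toReal - ε ≤ infDist z (C t) := by
          have h11 := ENNReal.toReal_mono (Metric.infEdist_ne_top (hC t ht).1) hz3.le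
          rwa [ENNReal.toReal_ofReal (by linarith)] at h11
        obtain ⟨y, hyA, hzy⟩ := hbuild r hrS z hzmem ε hε
        have h7 : infDist z (C t) ≤ infDist y (C t) + dist z y := by
          have := infDist_le_infDist_add_dist (x := z) (y := y) (s := C t)
          linarith
        have h8 : infDist y (C t) ≤ (excess A (C t)).toReal :=
          infDist_le_toReal_excess hfinexA hyA
        linarith
    have h9 : L t - lL ≤ (excess A (C t)).toReal := by
      by_contra hcon
      push_neg at hcon
      have h10 := hkey ((L t - lL - (excess A (C t)).toReal)/5) (by linarith)
      linarith
    calc ENNReal.ofReal (L t - lL) ≤ ENNReal.ofReal ((excess A (C t)).toReal) :=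
          ENNReal.ofReal_le_ofReal h9
      _ = excess A (C t) := ENNReal.ofReal_toReal hfinexA
  have hexeq : excess A (C t) = ENNReal.ofReal (L t - lL) := le_antisymm hle hge
  refine ⟨hbodyA, ⟨hexeq, hTe⟩, ?_, ?_⟩
  · intro h0
    have huniq : ENNReal.ofReal (L t - lL) = 0 := tendsto_nhds_unique hTe h0
    have hlam : L t - lL = 0 := le_antisymm (ENNReal.ofReal_eq_zero.1 huniq) hlam0
    intro y hy
    have h1 := hptA y hy
    rw [hlam] at h1
    have h2 : infDist y (C t) = 0 := le_antisymm h1 infDist_nonneg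
    have h3 : y ∈ closure (C t) := (Metric.mem_closure_iff_infDist_zero (hC t ht).1).2 h2
    rwa [(hC t ht).2.1.closure_eq] at h3
  · intro hsub
    have h1 : excess A (C t) = 0 := excess_subset_zero hsub
    rw [hexeq] at h1
    rwa [h1] at hTe

/-- One-sided limits of a moving set `C : I → Conv_H` of locally bounded retraction:
`C(t+)` and `C(t−)` are nonempty closed convex sets,
`e(C(t),C(t+)) = lim_{s→t+} e(C(t),C(s)) = ℓ_C(t+) − ℓ_C(t)` and
`e(C(t−),C(t)) = lim_{s→t−} e(C(s),C(t)) = ℓ_C(t) − ℓ_C(t−)` (here `L = ℓ_C`), and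
consequently `lim_{s→t+} e(C(t),C(s)) = 0 ↔ C(t) ⊆ C(t+)` and
`lim_{s→t−} e(C(s),C(t)) = 0 ↔ C(t−) ⊆ C(t)`. -/
theorem one_sided_limits_bounded_retraction
    [CompleteSpace H]
    (I : Set ℝ) (hI : I.OrdConnected) (hIne : I.Nonempty)
    (C : ℝ → Set H) (hC : ∀ t ∈ I, IsConvexBody (C t))
    (hret : ∀ c d : ℝ, Icc c d ⊆ I → ret C (Icc c d) ≠ ⊤)
    (L : ℝ → ℝ) (hL0 : ∀ t ∈ I, 0 ≤ L t)
    (hL : ∀ t ∈ I, ENNReal.ofReal (L t) = ret C (I ∩ Iic t)) :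
    ∀ t ∈ I,
      (IsConvexBody (rightLimSetOn C I t) ∧ IsConvexBody (leftLimSetOn C I t)) ∧
      (excess (C t) (rightLimSetOn C I t) = ENNReal.ofReal (rlimOn L I t - L t) ∧
        Tendsto (fun s => excess (C t) (C s)) (𝓝[I ∩ Ioi t] t)
          (𝓝 (ENNReal.ofReal (rlimOn L I t - L t)))) ∧
      (excess (leftLimSetOn C I t) (C t) = ENNReal.ofReal (L t - llimOn L I t) ∧
        Tendsto (fun s => excess (C s) (C t)) (𝓝[I ∩ Iio t] t)
          (𝓝 (ENNReal.ofReal (L t - llimOn L I t)))) ∧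
      ((Tendsto (fun s => excess (C t) (C s)) (𝓝[I ∩ Ioi t] t) (𝓝 0) ↔
          C t ⊆ rightLimSetOn C I t) ∧
        (Tendsto (fun s => excess (C s) (C t)) (𝓝[I ∩ Iio t] t) (𝓝 0) ↔
          leftLimSetOn C I t ⊆ C t)) := by
  intro t ht
  obtain ⟨hbodyR, ⟨hexR, hTR⟩, hiffR⟩ := right_side hI hC hL0 hL ht
  obtain ⟨hbodyL, ⟨hexL, hTL⟩, hiffL⟩ := left_side hI hC hL0 hL ht
  exact ⟨⟨hbodyR, hbodyL⟩, ⟨hexR, hTR⟩, ⟨hexL, hTL⟩, hiffR, hiffL⟩
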